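/- Let V(ρ₁,ρ₂) = (1/π) sin(πρ₁) sin(πρ₂)/sin(π(1-ρ₁-ρ₂)) and define G(s₁,s₂) = (1 + s₂/2)[ρ₁ρ₂ - (ρ₁+ρ₂)V(ρ₁,ρ₂)] where (ρ₁,ρ₂) = ((1-s₁)/(2+s₂), (1+s₁)/(2+s₂)). Also define σ̂(s₁,s₂) = (1 + s₂/2) σ(ρ(s₁,s₂)) where σ is the lozenge surface tension. Then ∂_{s₁}G = σ̂₁₂/σ̂₁₁ and ∂_{s₂}G = (1/2) σ̂₂₂/σ̂₁₁ on (-1,1) × (0,∞). -/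

import Mathlib

open Real

/-- The Lobachevsky-type function `Λ(θ) = ∫₀^θ ln(2 sin t) dt`. -/
noncomputable def Lob (θ : ℝ) : ℝ := ∫ t in (0 : ℝ)..θ, Real.log (2 * Real.sin t)

/-- The lozenge surface tension. -/
noncomputable def surfTen (ρ₁ ρ₂ : ℝ) : ℝ :=
  (1 / π) * (Lob (π * ρ₁) + Lob (π * ρ₂) + Lob (π * (1 - ρ₁ - ρ₂)))

/-- The stationary interface speed `V(ρ)`. -/
noncomputable def Vspeed (ρ₁ ρ₂ : ℝ) : ℝ :=
  (1 / π) * Real.sin (π * ρ₁) * Real.sin (π * ρ₂) / Real.sin (π * (1 - ρ₁ - ρ₂))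

/-- First slope coordinate `ρ₁(s) = (1-s₁)/(2+s₂)`. -/
noncomputable def rho1 (s₁ s₂ : ℝ) : ℝ := (1 - s₁) / (2 + s₂)

/-- Second slope coordinate `ρ₂(s) = (1+s₁)/(2+s₂)`. -/
noncomputable def rho2 (s₁ s₂ : ℝ) : ℝ := (1 + s₁) / (2 + s₂)

/-- The flux function `G`. -/
noncomputable def Gfun (s₁ s₂ : ℝ) : ℝ :=
  (1 + s₂ / 2) * (rho1 s₁ s₂ * rho2 s₁ s₂
    - (rho1 s₁ s₂ + rho2 s₁ s₂) * Vspeed (rho1 s₁ s₂) (rho2 s₁ s₂))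

/-- The surface tension in level-set coordinates, `σ̂(s) = (1+s₂/2)σ(ρ(s))`. -/
noncomputable def sigmaHat (s₁ s₂ : ℝ) : ℝ :=
  (1 + s₂ / 2) * surfTen (rho1 s₁ s₂) (rho2 s₁ s₂)

/-- Partial derivative in the first variable. -/
noncomputable def p1 (f : ℝ → ℝ → ℝ) (x y : ℝ) : ℝ := deriv (fun x' => f x' y) x

/-- Partial derivative in the second variable. -/
noncomputable def p2 (f : ℝ → ℝ → ℝ) (x y : ℝ) : ℝ := deriv (fun y' => f x y') y


section Aux
open MeasureTheory intervalIntegral Set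

lemma HasDerivAt.conv' {f : ℝ → ℝ} {f' g' x : ℝ} (h : HasDerivAt f f' x) (e : g' = f') :
    HasDerivAt f g' x := e ▸ h

lemma integrableOn_log_Ioc {δ : ℝ} (hδ : δ ≤ 1) : IntegrableOn Real.log (Set.Ioc 0 δ) := by
  rcases le_or_gt δ 0 with h | h
  · rw [Set.Ioc_eq_empty_of_le h]; exact integrableOn_empty
  have h' : IntegrableOn (fun x : ℝ => -Real.log x) (Set.Ioc 0 δ) := by
    apply integrableOn_deriv_of_nonneg (g := fun x : ℝ => x - x * Real.log x)
    · exact (continuous_id.sub Real.continuous_mul_log).continuousOn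
    · intro x hx
      have := (hasDerivAt_id x).sub (Real.hasDerivAt_mul_log (ne_of_gt hx.1))
      refine this.conv' ?_; ring
    · intro x hx
      have : Real.log x ≤ 0 := Real.log_nonpos (le_of_lt hx.1) (by linarith [hx.2])
      linarith
  have h2 : IntegrableOn (fun x : ℝ => -(-Real.log x)) (Set.Ioc 0 δ) := h'.neg
  exact h2.congr_fun (fun t _ => by ring) measurableSet_Ioc

lemma integrableOn_log_mul {c δ : ℝ} (hc : 0 < c) (hδ : δ ≤ 1) :
    IntegrableOn (fun t : ℝ => Real.log (c * t)) (Set.Ioc 0 δ) := by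
  apply IntegrableOn.congr_fun (f := fun t : ℝ => Real.log c + Real.log t)
  · exact (integrableOn_const measure_Ioc_lt_top.ne).add (integrableOn_log_Ioc hδ)
  · intro t ht; exact (Real.log_mul hc.ne' (ne_of_gt ht.1)).symm
  · exact measurableSet_Ioc

lemma intervalIntegrable_log_two_sin {θ : ℝ} (h0 : 0 < θ) (hπ : θ < π) :
    IntervalIntegrable (fun t => Real.log (2 * Real.sin t)) volume 0 θ := by
  set δ : ℝ := min θ (1/2) with hδdef
  have hδ0 : 0 < δ := lt_min h0 (by norm_num)
  have hδθ : δ ≤ θ := min_le_left _ _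
  have hδhalf : δ ≤ 1/2 := min_le_right _ _
  have hδpi : δ ≤ π/2 := le_trans hδhalf (by linarith [pi_gt_three])
  have hmeas : Measurable (fun t => Real.log (2 * Real.sin t)) :=
    Real.measurable_log.comp ((Real.continuous_sin.measurable).const_mul 2)
  have h1 : IntervalIntegrable (fun t => Real.log (2 * Real.sin t)) volume 0 δ := by
    rw [intervalIntegrable_iff_integrableOn_Ioc_of_le (le_of_lt hδ0)]
    have hg : IntegrableOn (fun t : ℝ => |Real.log (2/π * t)| + |Real.log (2 * t)|)
        (Set.Ioc 0 δ) :=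
      ((integrableOn_log_mul (by positivity) (by linarith)).abs).add
        ((integrableOn_log_mul (by norm_num) (by linarith)).abs)
    apply Integrable.mono' hg (hmeas.aestronglyMeasurable.restrict)
    rw [ae_restrict_iff' measurableSet_Ioc]
    filter_upwards with t ht
    have ht1 : 0 < t := ht.1
    have ht2 : t ≤ δ := ht.2
    have hsinpos : 0 < Real.sin t := Real.sin_pos_of_pos_of_lt_pi ht1
      (by nlinarith [pi_gt_three])
    have hub : Real.log (2 * Real.sin t) ≤ Real.log (2 * t) := by
      apply Real.log_le_log (by linarith)
      have := Real.sin_le ht1.le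
      linarith
    have hlb : Real.log (2 / π * t) ≤ Real.log (2 * Real.sin t) := by
      apply Real.log_le_log (by positivity)
      have := Real.mul_le_sin ht1.le (le_trans ht2 hδpi)
      nlinarith [pi_pos]
    rw [Real.norm_eq_abs, abs_le]
    constructor
    · nlinarith [neg_abs_le (Real.log (2/π * t)), abs_nonneg (Real.log (2*t))]
    · nlinarith [le_abs_self (Real.log (2 * t)), abs_nonneg (Real.log (2/π*t))]
  have h2 : IntervalIntegrable (fun t => Real.log (2 * Real.sin t)) volume δ θ := by
    apply ContinuousOn.intervalIntegrable
    apply ContinuousOn.log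
    · exact (continuous_const.mul Real.continuous_sin).continuousOn
    · intro t ht
      rw [Set.uIcc_of_le hδθ] at ht
      have : 0 < Real.sin t := Real.sin_pos_of_pos_of_lt_pi (lt_of_lt_of_le hδ0 ht.1)
        (lt_of_le_of_lt ht.2 hπ)
      positivity
  exact h1.trans h2

lemma hasDerivAt_Lob' {θ : ℝ} (h0 : 0 < θ) (hπ : θ < π) :
    HasDerivAt (fun u => ∫ t in (0:ℝ)..u, Real.log (2 * Real.sin t))
      (Real.log (2 * Real.sin θ)) θ := by
  have hmeas : Measurable (fun t => Real.log (2 * Real.sin t)) :=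
    Real.measurable_log.comp ((Real.continuous_sin.measurable).const_mul 2)
  apply intervalIntegral.integral_hasDerivAt_right
    (intervalIntegrable_log_two_sin h0 hπ)
    (hmeas.stronglyMeasurable.stronglyMeasurableAtFilter)
  have hs : Real.sin θ ≠ 0 := (Real.sin_pos_of_pos_of_lt_pi h0 hπ).ne'
  exact (Real.continuousAt_log (by positivity)).comp
    ((continuous_const.mul Real.continuous_sin).continuousAt)

lemma hasDerivAt_Lob {θ : ℝ} (h0 : 0 < θ) (hπ : θ < π) :
    HasDerivAt Lob (Real.log (2 * Real.sin θ)) θ := hasDerivAt_Lob' h0 hπ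

section comp
variable {u : ℝ → ℝ} {u' t : ℝ}

lemma hasDerivAt_sinpi (hu : HasDerivAt u u' t) :
    HasDerivAt (fun s => Real.sin (π * u s)) (Real.cos (π * u t) * (π * u')) t :=
  (Real.hasDerivAt_sin _).comp t (hu.const_mul π)

lemma hasDerivAt_Lob_comp (hu : HasDerivAt u u' t) (h0 : 0 < u t) (h1 : u t < 1) :
    HasDerivAt (fun s => Lob (π * u s)) (Real.log (2 * Real.sin (π * u t)) * (π * u')) t :=
  (hasDerivAt_Lob (by positivity) (by nlinarith [pi_pos])).comp t (hu.const_mul π)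

lemma hasDerivAt_logsin (hu : HasDerivAt u u' t) (h0 : 0 < u t) (h1 : u t < 1) :
    HasDerivAt (fun s => Real.log (2 * Real.sin (π * u s)))
      (Real.cos (π * u t) / Real.sin (π * u t) * (π * u')) t := by
  have hs : 0 < Real.sin (π * u t) :=
    Real.sin_pos_of_pos_of_lt_pi (by positivity) (by nlinarith [pi_pos])
  have hg : HasDerivAt (fun s => 2 * Real.sin (π * u s))
      (2 * (Real.cos (π * u t) * (π * u'))) t := (hasDerivAt_sinpi hu).const_mul 2
  have hne : 2 * Real.sin (π * u t) ≠ 0 := by positivity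
  have := (Real.hasDerivAt_log hne).comp t hg
  refine this.conv' ?_
  field_simp
end comp

section rhoderiv
variable (x y : ℝ)

lemma rho1_hasDeriv1 : HasDerivAt (fun x' => rho1 x' y) (-(1/(2+y))) x := by
  unfold rho1
  have := ((hasDerivAt_id x).const_sub 1).div_const (2+y)
  refine this.conv' ?_
  all_goals ring

lemma rho2_hasDeriv1 : HasDerivAt (fun x' => rho2 x' y) (1/(2+y)) x := by
  unfold rho2
  have := ((hasDerivAt_id x).const_add 1).div_const (2+y)
  refine this.conv' ?_
  all_goals ring

lemma rho3_hasDeriv1 : HasDerivAt (fun x' => 1 - rho1 x' y - rho2 x' y) 0 x := by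
  have := ((hasDerivAt_const x (1:ℝ)).sub (rho1_hasDeriv1 x y)).sub (rho2_hasDeriv1 x y)
  refine this.conv' ?_; ring

lemma rho1_hasDeriv2 (hy : 0 < y) :
    HasDerivAt (fun y' => rho1 x y') (-(rho1 x y/(2+y))) y := by
  unfold rho1
  have hne : (2:ℝ) + y ≠ 0 := by positivity
  have := (hasDerivAt_const y (1-x)).div ((hasDerivAt_const y (2:ℝ)).add (hasDerivAt_id y)) hne
  refine this.conv' ?_
  simp only [Pi.add_apply, id_eq]
  rw [div_div, ← sq]
  ring

lemma rho2_hasDeriv2 (hy : 0 < y) :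
    HasDerivAt (fun y' => rho2 x y') (-(rho2 x y/(2+y))) y := by
  unfold rho2
  have hne : (2:ℝ) + y ≠ 0 := by positivity
  have := (hasDerivAt_const y (1+x)).div ((hasDerivAt_const y (2:ℝ)).add (hasDerivAt_id y)) hne
  refine this.conv' ?_
  simp only [Pi.add_apply, id_eq]
  rw [div_div, ← sq]
  ring

lemma rho3_hasDeriv2 (hy : 0 < y) :
    HasDerivAt (fun y' => 1 - rho1 x y' - rho2 x y') ((rho1 x y + rho2 x y)/(2+y)) y := by
  have := ((hasDerivAt_const y (1:ℝ)).sub (rho1_hasDeriv2 x y hy)).sub (rho2_hasDeriv2 x y hy)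
  refine this.conv' ?_; ring
end rhoderiv

section facts
variable {x y : ℝ}

lemma rho1_mem (hx1 : -1 < x) (hx2 : x < 1) (hy : 0 < y) :
    0 < rho1 x y ∧ rho1 x y < 1 := by
  unfold rho1
  constructor
  · apply div_pos <;> linarith
  · rw [div_lt_one (by linarith)]; linarith

lemma rho2_mem (hx1 : -1 < x) (hx2 : x < 1) (hy : 0 < y) :
    0 < rho2 x y ∧ rho2 x y < 1 := by
  unfold rho2
  constructor
  · apply div_pos <;> linarith
  · rw [div_lt_one (by linarith)]; linarith

lemma rho3_mem (hx1 : -1 < x) (hx2 : x < 1) (hy : 0 < y) :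
    0 < 1 - rho1 x y - rho2 x y ∧ 1 - rho1 x y - rho2 x y < 1 := by
  have h : 1 - rho1 x y - rho2 x y = y / (2+y) := by
    unfold rho1 rho2; field_simp; ring
  rw [h]
  constructor
  · apply div_pos <;> linarith
  · rw [div_lt_one (by linarith)]; linarith
end facts

noncomputable def F1 (x y : ℝ) : ℝ :=
  (1/2) * (Real.log (2 * Real.sin (π * rho2 x y)) - Real.log (2 * Real.sin (π * rho1 x y)))

noncomputable def F2 (x y : ℝ) : ℝ :=
  (1/2) * surfTen (rho1 x y) (rho2 x y)
  - (1/2) * (rho1 x y * Real.log (2 * Real.sin (π * rho1 x y))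
           + rho2 x y * Real.log (2 * Real.sin (π * rho2 x y)))
  + (1/(2+y)) * Real.log (2 * Real.sin (π * (1 - rho1 x y - rho2 x y)))

noncomputable def A11 (x y : ℝ) : ℝ :=
  π/(2*(2+y)) * (Real.cos (π * rho2 x y)/Real.sin (π * rho2 x y)
    + Real.cos (π * rho1 x y)/Real.sin (π * rho1 x y))

noncomputable def A12 (x y : ℝ) : ℝ :=
  π/(2*(2+y)) * (rho1 x y * Real.cos (π * rho1 x y)/Real.sin (π * rho1 x y)
    - rho2 x y * Real.cos (π * rho2 x y)/Real.sin (π * rho2 x y))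

noncomputable def A22 (x y : ℝ) : ℝ :=
  π/(2*(2+y)) * (rho1 x y^2 * Real.cos (π * rho1 x y)/Real.sin (π * rho1 x y)
    + rho2 x y^2 * Real.cos (π * rho2 x y)/Real.sin (π * rho2 x y)
    + (rho1 x y + rho2 x y)^2 * Real.cos (π * (1 - rho1 x y - rho2 x y))
        /Real.sin (π * (1 - rho1 x y - rho2 x y)))

noncomputable def G1v (x y : ℝ) : ℝ :=
  -(x/(2+y)) - (Real.sin (π * rho1 x y) * Real.cos (π * rho2 x y)
      - Real.cos (π * rho1 x y) * Real.sin (π * rho2 x y))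
    / ((2+y) * Real.sin (π * (1 - rho1 x y - rho2 x y)))

noncomputable def G2v (x y : ℝ) : ℝ :=
  -(rho1 x y * rho2 x y)/2
  + (Real.sin (π * rho1 x y) * Real.sin (π * rho2 x y)
      / ((2+y) * Real.sin (π * (1 - rho1 x y - rho2 x y))))
    * (rho1 x y * Real.cos (π * rho1 x y)/Real.sin (π * rho1 x y)
     + rho2 x y * Real.cos (π * rho2 x y)/Real.sin (π * rho2 x y)
     + (rho1 x y + rho2 x y) * Real.cos (π * (1 - rho1 x y - rho2 x y))
         /Real.sin (π * (1 - rho1 x y - rho2 x y)))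


lemma sigmaHat_hasDeriv1 {x y : ℝ} (hx1 : -1 < x) (hx2 : x < 1) (hy : 0 < y) :
    HasDerivAt (fun x' => sigmaHat x' y) (F1 x y) x := by
  obtain ⟨h1a, h1b⟩ := rho1_mem hx1 hx2 hy
  obtain ⟨h2a, h2b⟩ := rho2_mem hx1 hx2 hy
  obtain ⟨h3a, h3b⟩ := rho3_mem hx1 hx2 hy
  have hL1 := hasDerivAt_Lob_comp (rho1_hasDeriv1 x y) h1a h1b
  have hL2 := hasDerivAt_Lob_comp (rho2_hasDeriv1 x y) h2a h2b
  have hL3 := hasDerivAt_Lob_comp (rho3_hasDeriv1 x y) h3a h3b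
  have H := (((hL1.add hL2).add hL3).const_mul (1/π)).const_mul (1+y/2)
  simp only [sigmaHat, surfTen]
  refine H.conv' ?_
  have hc : (2:ℝ)+y ≠ 0 := by positivity
  unfold F1
  field_simp
  ring

lemma surfTen_hasDeriv2 {x y : ℝ} (hx1 : -1 < x) (hx2 : x < 1) (hy : 0 < y) :
    HasDerivAt (fun y' => surfTen (rho1 x y') (rho2 x y'))
    ((1/π) * (Real.log (2 * Real.sin (π * rho1 x y)) * (π * -(rho1 x y/(2+y)))
      + Real.log (2 * Real.sin (π * rho2 x y)) * (π * -(rho2 x y/(2+y)))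
      + Real.log (2 * Real.sin (π * (1 - rho1 x y - rho2 x y)))
          * (π * ((rho1 x y + rho2 x y)/(2+y))))) y := by
  obtain ⟨h1a, h1b⟩ := rho1_mem hx1 hx2 hy
  obtain ⟨h2a, h2b⟩ := rho2_mem hx1 hx2 hy
  obtain ⟨h3a, h3b⟩ := rho3_mem hx1 hx2 hy
  have hL1 := hasDerivAt_Lob_comp (rho1_hasDeriv2 x y hy) h1a h1b
  have hL2 := hasDerivAt_Lob_comp (rho2_hasDeriv2 x y hy) h2a h2b
  have hL3 := hasDerivAt_Lob_comp (rho3_hasDeriv2 x y hy) h3a h3b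
  exact ((hL1.add hL2).add hL3).const_mul (1/π)

lemma sigmaHat_hasDeriv2 {x y : ℝ} (hx1 : -1 < x) (hx2 : x < 1) (hy : 0 < y) :
    HasDerivAt (fun y' => sigmaHat x y') (F2 x y) y := by
  have hA : HasDerivAt (fun y' : ℝ => 1 + y'/2) (1/2) y := by
    have := ((hasDerivAt_id y).div_const 2).const_add 1
    exact this
  have H := hA.mul (surfTen_hasDeriv2 hx1 hx2 hy)
  simp only [sigmaHat]
  refine H.conv' ?_
  have hc : (2:ℝ)+y ≠ 0 := by positivity
  unfold F2 rho1 rho2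
  field_simp
  ring

lemma F1_hasDeriv1 {x y : ℝ} (hx1 : -1 < x) (hx2 : x < 1) (hy : 0 < y) :
    HasDerivAt (fun x' => F1 x' y) (A11 x y) x := by
  obtain ⟨h1a, h1b⟩ := rho1_mem hx1 hx2 hy
  obtain ⟨h2a, h2b⟩ := rho2_mem hx1 hx2 hy
  have hg1 := hasDerivAt_logsin (rho1_hasDeriv1 x y) h1a h1b
  have hg2 := hasDerivAt_logsin (rho2_hasDeriv1 x y) h2a h2b
  have H := (hg2.sub hg1).const_mul (1/2:ℝ)
  unfold F1
  refine H.conv' ?_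
  have hc : (2:ℝ)+y ≠ 0 := by positivity
  have hsa : Real.sin (π * rho1 x y) ≠ 0 :=
    (Real.sin_pos_of_pos_of_lt_pi (by positivity) (by nlinarith [pi_pos])).ne'
  have hsb : Real.sin (π * rho2 x y) ≠ 0 :=
    (Real.sin_pos_of_pos_of_lt_pi (by positivity) (by nlinarith [pi_pos])).ne'
  unfold A11
  field_simp
  ring

lemma F1_hasDeriv2 {x y : ℝ} (hx1 : -1 < x) (hx2 : x < 1) (hy : 0 < y) :
    HasDerivAt (fun y' => F1 x y') (A12 x y) y := by
  obtain ⟨h1a, h1b⟩ := rho1_mem hx1 hx2 hy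
  obtain ⟨h2a, h2b⟩ := rho2_mem hx1 hx2 hy
  have hg1 := hasDerivAt_logsin (rho1_hasDeriv2 x y hy) h1a h1b
  have hg2 := hasDerivAt_logsin (rho2_hasDeriv2 x y hy) h2a h2b
  have H := (hg2.sub hg1).const_mul (1/2:ℝ)
  unfold F1
  refine H.conv' ?_
  have hc : (2:ℝ)+y ≠ 0 := by positivity
  have hsa : Real.sin (π * rho1 x y) ≠ 0 :=
    (Real.sin_pos_of_pos_of_lt_pi (by positivity) (by nlinarith [pi_pos])).ne'
  have hsb : Real.sin (π * rho2 x y) ≠ 0 :=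
    (Real.sin_pos_of_pos_of_lt_pi (by positivity) (by nlinarith [pi_pos])).ne'
  unfold A12
  field_simp
  ring

set_option maxHeartbeats 2000000 in
lemma F2_hasDeriv2 {x y : ℝ} (hx1 : -1 < x) (hx2 : x < 1) (hy : 0 < y) :
    HasDerivAt (fun y' => F2 x y') (A22 x y) y := by
  obtain ⟨h1a, h1b⟩ := rho1_mem hx1 hx2 hy
  obtain ⟨h2a, h2b⟩ := rho2_mem hx1 hx2 hy
  obtain ⟨h3a, h3b⟩ := rho3_mem hx1 hx2 hy
  have hc : (2:ℝ)+y ≠ 0 := by positivity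
  have hg1 := hasDerivAt_logsin (rho1_hasDeriv2 x y hy) h1a h1b
  have hg2 := hasDerivAt_logsin (rho2_hasDeriv2 x y hy) h2a h2b
  have hg3 := hasDerivAt_logsin (rho3_hasDeriv2 x y hy) h3a h3b
  have hT1 := (surfTen_hasDeriv2 hx1 hx2 hy).const_mul (1/2:ℝ)
  have hT2 := ((((rho1_hasDeriv2 x y hy).mul hg1).add
    ((rho2_hasDeriv2 x y hy).mul hg2)).const_mul (1/2:ℝ))
  have hinv : HasDerivAt (fun y' : ℝ => 1/(2+y')) (-(1/(2+y)^2)) y := by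
    have := (hasDerivAt_const y (1:ℝ)).div
      ((hasDerivAt_const y (2:ℝ)).add (hasDerivAt_id y)) hc
    refine this.conv' ?_
    simp only [Pi.add_apply, id_eq]
    ring
  have hT3 := hinv.mul hg3
  have H := (hT1.sub hT2).add hT3
  unfold F2
  refine H.conv' ?_
  have hsa : Real.sin (π * rho1 x y) ≠ 0 :=
    (Real.sin_pos_of_pos_of_lt_pi (by positivity) (by nlinarith [pi_pos])).ne'
  have hsb : Real.sin (π * rho2 x y) ≠ 0 :=
    (Real.sin_pos_of_pos_of_lt_pi (by positivity) (by nlinarith [pi_pos])).ne'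
  have hs3 : Real.sin (π * (1 - rho1 x y - rho2 x y)) ≠ 0 :=
    (Real.sin_pos_of_pos_of_lt_pi (by positivity) (by nlinarith [pi_pos])).ne'
  unfold A22
  set S := surfTen (rho1 x y) (rho2 x y) with hS
  set L1 := Real.log (2 * Real.sin (π * rho1 x y)) with hL1'
  set L2 := Real.log (2 * Real.sin (π * rho2 x y)) with hL2'
  set L3 := Real.log (2 * Real.sin (π * (1 - rho1 x y - rho2 x y))) with hL3'
  set ca := Real.cos (π * rho1 x y) with hca
  set cb := Real.cos (π * rho2 x y) with hcb
  set c3 := Real.cos (π * (1 - rho1 x y - rho2 x y)) with hc3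
  set sa := Real.sin (π * rho1 x y) with hsa'
  set sb := Real.sin (π * rho2 x y) with hsb'
  set s3 := Real.sin (π * (1 - rho1 x y - rho2 x y)) with hs3'
  rw [show rho1 x y = (1-x)/(2+y) from rfl, show rho2 x y = (1+x)/(2+y) from rfl]
  field_simp
  ring

set_option maxHeartbeats 2000000 in
lemma Gfun_hasDeriv1 {x y : ℝ} (hx1 : -1 < x) (hx2 : x < 1) (hy : 0 < y) :
    HasDerivAt (fun x' => Gfun x' y) (G1v x y) x := by
  obtain ⟨h1a, h1b⟩ := rho1_mem hx1 hx2 hy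
  obtain ⟨h2a, h2b⟩ := rho2_mem hx1 hx2 hy
  obtain ⟨h3a, h3b⟩ := rho3_mem hx1 hx2 hy
  have hc : (2:ℝ)+y ≠ 0 := by positivity
  have hsa : Real.sin (π * rho1 x y) ≠ 0 :=
    (Real.sin_pos_of_pos_of_lt_pi (by positivity) (by nlinarith [pi_pos])).ne'
  have hsb : Real.sin (π * rho2 x y) ≠ 0 :=
    (Real.sin_pos_of_pos_of_lt_pi (by positivity) (by nlinarith [pi_pos])).ne'
  have hs3 : Real.sin (π * (1 - rho1 x y - rho2 x y)) ≠ 0 :=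
    (Real.sin_pos_of_pos_of_lt_pi (by positivity) (by nlinarith [pi_pos])).ne'
  have hr1 := rho1_hasDeriv1 x y
  have hr2 := rho2_hasDeriv1 x y
  have hr3 := rho3_hasDeriv1 x y
  have hN := ((hasDerivAt_sinpi hr1).const_mul (1/π)).mul (hasDerivAt_sinpi hr2)
  have hV := hN.div (hasDerivAt_sinpi hr3) hs3
  have H := ((hr1.mul hr2).sub ((hr1.add hr2).mul hV)).const_mul (1+y/2)
  simp only [Gfun, Vspeed]
  refine H.conv' ?_
  simp only [Pi.add_apply, Pi.mul_apply, Pi.div_apply]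
  unfold G1v
  set ca := Real.cos (π * rho1 x y) with hca
  set cb := Real.cos (π * rho2 x y) with hcb
  set c3 := Real.cos (π * (1 - rho1 x y - rho2 x y)) with hc3
  set sa := Real.sin (π * rho1 x y) with hsa'
  set sb := Real.sin (π * rho2 x y) with hsb'
  set s3 := Real.sin (π * (1 - rho1 x y - rho2 x y)) with hs3'
  rw [show rho1 x y = (1-x)/(2+y) from rfl, show rho2 x y = (1+x)/(2+y) from rfl]
  field_simp
  ring

set_option maxHeartbeats 2000000 in
lemma Gfun_hasDeriv2 {x y : ℝ} (hx1 : -1 < x) (hx2 : x < 1) (hy : 0 < y) :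
    HasDerivAt (fun y' => Gfun x y') (G2v x y) y := by
  obtain ⟨h1a, h1b⟩ := rho1_mem hx1 hx2 hy
  obtain ⟨h2a, h2b⟩ := rho2_mem hx1 hx2 hy
  obtain ⟨h3a, h3b⟩ := rho3_mem hx1 hx2 hy
  have hc : (2:ℝ)+y ≠ 0 := by positivity
  have hsa : Real.sin (π * rho1 x y) ≠ 0 :=
    (Real.sin_pos_of_pos_of_lt_pi (by positivity) (by nlinarith [pi_pos])).ne'
  have hsb : Real.sin (π * rho2 x y) ≠ 0 :=
    (Real.sin_pos_of_pos_of_lt_pi (by positivity) (by nlinarith [pi_pos])).ne'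
  have hs3 : Real.sin (π * (1 - rho1 x y - rho2 x y)) ≠ 0 :=
    (Real.sin_pos_of_pos_of_lt_pi (by positivity) (by nlinarith [pi_pos])).ne'
  have hr1 := rho1_hasDeriv2 x y hy
  have hr2 := rho2_hasDeriv2 x y hy
  have hr3 := rho3_hasDeriv2 x y hy
  have hA : HasDerivAt (fun y' : ℝ => 1 + y'/2) (1/2) y := by
    have := ((hasDerivAt_id y).div_const 2).const_add 1
    exact this
  have hN := ((hasDerivAt_sinpi hr1).const_mul (1/π)).mul (hasDerivAt_sinpi hr2)
  have hV := hN.div (hasDerivAt_sinpi hr3) hs3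
  have H := hA.mul ((hr1.mul hr2).sub ((hr1.add hr2).mul hV))
  simp only [Gfun, Vspeed]
  refine H.conv' ?_
  simp only [Pi.add_apply, Pi.sub_apply, Pi.mul_apply, Pi.div_apply]
  unfold G2v
  set ca := Real.cos (π * rho1 x y) with hca
  set cb := Real.cos (π * rho2 x y) with hcb
  set c3 := Real.cos (π * (1 - rho1 x y - rho2 x y)) with hc3
  set sa := Real.sin (π * rho1 x y) with hsa'
  set sb := Real.sin (π * rho2 x y) with hsb'
  set s3 := Real.sin (π * (1 - rho1 x y - rho2 x y)) with hs3'
  rw [show rho1 x y = (1-x)/(2+y) from rfl, show rho2 x y = (1+x)/(2+y) from rfl]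
  field_simp
  ring

section identities
variable {x y : ℝ}

lemma sin3_eq (x y : ℝ) : Real.sin (π * (1 - rho1 x y - rho2 x y)) =
    Real.sin (π * rho1 x y) * Real.cos (π * rho2 x y)
      + Real.cos (π * rho1 x y) * Real.sin (π * rho2 x y) := by
  rw [show π * (1 - rho1 x y - rho2 x y) = π - (π * rho1 x y + π * rho2 x y) by ring,
    Real.sin_pi_sub, Real.sin_add]

lemma cos3_eq (x y : ℝ) : Real.cos (π * (1 - rho1 x y - rho2 x y)) =
    -(Real.cos (π * rho1 x y) * Real.cos (π * rho2 x y)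
      - Real.sin (π * rho1 x y) * Real.sin (π * rho2 x y)) := by
  rw [show π * (1 - rho1 x y - rho2 x y) = π - (π * rho1 x y + π * rho2 x y) by ring,
    Real.cos_pi_sub, Real.cos_add]

lemma sinpos (hx1 : -1 < x) (hx2 : x < 1) (hy : 0 < y) :
    0 < Real.sin (π * rho1 x y) ∧ 0 < Real.sin (π * rho2 x y) ∧
      0 < Real.sin (π * (1 - rho1 x y - rho2 x y)) := by
  obtain ⟨h1a, h1b⟩ := rho1_mem hx1 hx2 hy
  obtain ⟨h2a, h2b⟩ := rho2_mem hx1 hx2 hy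
  obtain ⟨h3a, h3b⟩ := rho3_mem hx1 hx2 hy
  exact ⟨Real.sin_pos_of_pos_of_lt_pi (by positivity) (by nlinarith [pi_pos]),
    Real.sin_pos_of_pos_of_lt_pi (by positivity) (by nlinarith [pi_pos]),
    Real.sin_pos_of_pos_of_lt_pi (by positivity) (by nlinarith [pi_pos])⟩

lemma A11_pos (hx1 : -1 < x) (hx2 : x < 1) (hy : 0 < y) : 0 < A11 x y := by
  obtain ⟨hsa, hsb, hs3⟩ := sinpos hx1 hx2 hy
  have hc : (0:ℝ) < 2 + y := by linarith
  have h : A11 x y = π * Real.sin (π * (1 - rho1 x y - rho2 x y))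
      / (2*(2+y)*(Real.sin (π * rho1 x y) * Real.sin (π * rho2 x y))) := by
    unfold A11
    rw [sin3_eq]
    field_simp
  rw [h]
  exact div_pos (mul_pos pi_pos hs3) (by positivity)

lemma identity1 (hx1 : -1 < x) (hx2 : x < 1) (hy : 0 < y) :
    G1v x y * A11 x y = A12 x y := by
  obtain ⟨hsa, hsb, hs3⟩ := sinpos hx1 hx2 hy
  have hc : (2:ℝ) + y ≠ 0 := by positivity
  have hs3' := hs3
  rw [sin3_eq] at hs3'
  unfold G1v A11 A12
  rw [sin3_eq]
  set ca := Real.cos (π * rho1 x y) with hca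
  set cb := Real.cos (π * rho2 x y) with hcb
  set sa := Real.sin (π * rho1 x y) with hsa'
  set sb := Real.sin (π * rho2 x y) with hsb'
  rw [show rho1 x y = (1-x)/(2+y) from rfl, show rho2 x y = (1+x)/(2+y) from rfl]
  field_simp [hsa.ne', hsb.ne', hs3'.ne']
  ring

set_option maxHeartbeats 4000000 in
lemma identity2 (hx1 : -1 < x) (hx2 : x < 1) (hy : 0 < y) :
    G2v x y * A11 x y = (1/2) * A22 x y := by
  obtain ⟨hsa, hsb, hs3⟩ := sinpos hx1 hx2 hy
  have hc : (2:ℝ) + y ≠ 0 := by positivity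
  have hs3' := hs3
  rw [sin3_eq] at hs3'
  unfold G2v A11 A22
  rw [sin3_eq, cos3_eq]
  set ca := Real.cos (π * rho1 x y) with hca
  set cb := Real.cos (π * rho2 x y) with hcb
  set sa := Real.sin (π * rho1 x y) with hsa'
  set sb := Real.sin (π * rho2 x y) with hsb'
  rw [show rho1 x y = (1-x)/(2+y) from rfl, show rho2 x y = (1+x)/(2+y) from rfl]
  field_simp [hsa.ne', hsb.ne', hs3'.ne',
    (by rw [mul_comm sb ca]; exact hs3'.ne' : sa * cb + sb * ca ≠ 0)]
  ring
end identities

end Aux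

/-- The identities `∂₁G = σ̂₁₂/σ̂₁₁` and `∂₂G = (1/2)σ̂₂₂/σ̂₁₁` on `(-1,1) × (0,∞)`. -/
theorem G_partials_eq_sigmaHat_ratios (s₁ s₂ : ℝ)
    (h1 : -1 < s₁) (h2 : s₁ < 1) (h3 : 0 < s₂) :
    p1 Gfun s₁ s₂ = p2 (p1 sigmaHat) s₁ s₂ / p1 (p1 sigmaHat) s₁ s₂ ∧
    p2 Gfun s₁ s₂ = (1 / 2) * p2 (p2 sigmaHat) s₁ s₂ / p1 (p1 sigmaHat) s₁ s₂ := by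
  have hA11 := A11_pos h1 h2 h3
  have hp1p1 : p1 (p1 sigmaHat) s₁ s₂ = A11 s₁ s₂ := by
    have hev : (fun x => p1 sigmaHat x s₂) =ᶠ[nhds s₁] fun x => F1 x s₂ := by
      filter_upwards [Ioo_mem_nhds h1 h2] with x hx
      exact (sigmaHat_hasDeriv1 hx.1 hx.2 h3).deriv
    rw [show p1 (p1 sigmaHat) s₁ s₂ = deriv (fun x => p1 sigmaHat x s₂) s₁ from rfl,
      hev.deriv_eq, (F1_hasDeriv1 h1 h2 h3).deriv]
  have hp2p1 : p2 (p1 sigmaHat) s₁ s₂ = A12 s₁ s₂ := by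
    have hev : (fun y => p1 sigmaHat s₁ y) =ᶠ[nhds s₂] fun y => F1 s₁ y := by
      filter_upwards [Ioi_mem_nhds h3] with y hy
      exact (sigmaHat_hasDeriv1 h1 h2 hy).deriv
    rw [show p2 (p1 sigmaHat) s₁ s₂ = deriv (fun y => p1 sigmaHat s₁ y) s₂ from rfl,
      hev.deriv_eq, (F1_hasDeriv2 h1 h2 h3).deriv]
  have hp2p2 : p2 (p2 sigmaHat) s₁ s₂ = A22 s₁ s₂ := by
    have hev : (fun y => p2 sigmaHat s₁ y) =ᶠ[nhds s₂] fun y => F2 s₁ y := by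
      filter_upwards [Ioi_mem_nhds h3] with y hy
      exact (sigmaHat_hasDeriv2 h1 h2 hy).deriv
    rw [show p2 (p2 sigmaHat) s₁ s₂ = deriv (fun y => p2 sigmaHat s₁ y) s₂ from rfl,
      hev.deriv_eq, (F2_hasDeriv2 h1 h2 h3).deriv]
  have hg1 : p1 Gfun s₁ s₂ = G1v s₁ s₂ := (Gfun_hasDeriv1 h1 h2 h3).deriv
  have hg2 : p2 Gfun s₁ s₂ = G2v s₁ s₂ := (Gfun_hasDeriv2 h1 h2 h3).deriv
  rw [hp1p1, hp2p1, hp2p2, hg1, hg2]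
  constructor
  · rw [eq_div_iff hA11.ne']
    exact identity1 h1 h2 h3
  · rw [eq_div_iff hA11.ne']
    exact identity2 h1 h2 h3
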